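/- The function h₁ satisfies h₁(0) = h₁(μ₁^{-1/(p-1)}) = 0, h₁ is strictly increasing on [0, ((2-p)/(p μ₁))^{1/(p-1)}] and strictly decreasing on [((2-p)/(p μ₁))^{1/(p-1)}, μ₁^{-1/(p-1)}]; moreover, for every k ∈ (0, μ₁^{-1/(p-1)}) the derivative satisfies h₁'(k) ≥ -β^{-2/p} μ₁^{2/p} (p-1)^{2/p}, with equality exactly at k = (p μ₁)^{-1/(p-1)}. -/

import Mathlib

open Real

lemma rpow_left_inj' {a b c : ℝ} (ha : 0 ≤ a) (hb : 0 ≤ b) (hc : 0 < c) :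
    a ^ c = b ^ c ↔ a = b := by
  constructor
  · intro h
    exact le_antisymm ((Real.rpow_le_rpow_iff ha hb hc).1 h.le)
      ((Real.rpow_le_rpow_iff hb ha hc).1 h.ge)
  · rintro rfl; rfl

lemma amgm2 {A B w : ℝ} (hA : 0 < A) (hB : 0 < B) (hw : 0 < w) (hw1 : w < 1) :
    A ^ w * B ^ (1 - w) ≤ w * A + (1 - w) * B ∧
    (A ^ w * B ^ (1 - w) = w * A + (1 - w) * B ↔ A = B) := by
  rcases eq_or_ne A B with rfl | hAB
  · have h : A ^ w * A ^ (1 - w) = w * A + (1 - w) * A := by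
      rw [← Real.rpow_add hA, show w + (1 - w) = 1 by ring, Real.rpow_one]; ring
    exact ⟨h.le, by simp [h]⟩
  · have hstrict : A ^ w * B ^ (1 - w) < w * A + (1 - w) * B := by
    
      have hcc := strictConcaveOn_log_Ioi.2 (Set.mem_Ioi.2 hA) (Set.mem_Ioi.2 hB) hAB hw
        (show (0:ℝ) < 1 - w by linarith) (by ring)
      have hpos : 0 < w * A + (1 - w) * B := by
        have : 0 < 1 - w := by linarith
        positivity
      calc A ^ w * B ^ (1 - w) = exp (w * log A + (1 - w) * log B) := by
            rw [Real.rpow_def_of_pos hA, Real.rpow_def_of_pos hB, ← Real.exp_add]; congr 1; ring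
        _ < exp (log (w * A + (1 - w) * B)) := by
            apply Real.exp_lt_exp.2; simpa only [smul_eq_mul] using hcc
        _ = _ := Real.exp_log hpos
    exact ⟨hstrict.le, ⟨fun h => absurd h hstrict.ne, fun h => absurd h hAB⟩⟩

lemma key {p x : ℝ} (hp1 : 1 < p) (hp2 : p < 2) (hx0 : 0 < x) (hx1 : x < 1) :
    (1 - x) ^ ((2 - p) / p) * (p * x - (2 - p)) ≤ p * (p - 1) ^ (2 / p) * x ^ (2 / p) ∧
    ((1 - x) ^ ((2 - p) / p) * (p * x - (2 - p)) = p * (p - 1) ^ (2 / p) * x ^ (2 / p) ↔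
      x = 1 / p) := by
  have hp0 : 0 < p := by linarith
  have hp1' : 0 < p - 1 := by linarith
  have h1x : 0 < 1 - x := by linarith
  have hc : 0 < (2:ℝ) / p := by positivity
  have hRpos : 0 < p * (p - 1) ^ (2 / p) * x ^ (2 / p) := by positivity
  rcases le_or_gt (p * x - (2 - p)) 0 with hA | hA
  · have hL : (1 - x) ^ ((2 - p) / p) * (p * x - (2 - p)) ≤ 0 :=
      mul_nonpos_of_nonneg_of_nonpos (Real.rpow_nonneg h1x.le _) hA
    refine ⟨hL.trans hRpos.le, ⟨fun h => absurd h (hL.trans_lt hRpos).ne, fun h => ?_⟩⟩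
    rw [h] at hA
    have hP : p * (1 / p) = 1 := by field_simp
    nlinarith
  · set A := p * x - (2 - p) with hAdef
    have hBpos : 0 < p * (1 - x) := by positivity
    obtain ⟨hle, hiff⟩ := amgm2 hA hBpos (show 0 < p / 2 by linarith) (show p / 2 < 1 by linarith)
    have hsum : p / 2 * A + (1 - p / 2) * (p * (1 - x)) = p * (p - 1) * x := by
      rw [hAdef]; ring
    have hAB : (A = p * (1 - x)) ↔ x = 1 / p := by
      rw [hAdef]
      constructor <;> intro h
      · field_simp at h ⊢; linarith
      · rw [h]; field_simp; ring
    set P := p ^ ((2 - p) / p) with hPdef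
    have hPpos : 0 < P := Real.rpow_pos_of_pos hp0 _
    have ep : p ^ ((2:ℝ) / p) = p * P := by
      rw [hPdef, show (2:ℝ) / p = 1 + (2 - p) / p by field_simp; ring, Real.rpow_add hp0,
        Real.rpow_one]
    have e1 : (A ^ (p / 2) * (p * (1 - x)) ^ (1 - p / 2)) ^ (2 / p)
        = ((1 - x) ^ ((2 - p) / p) * A) * P := by
      rw [Real.mul_rpow (Real.rpow_nonneg hA.le _) (Real.rpow_nonneg hBpos.le _),
          ← Real.rpow_mul hA.le, ← Real.rpow_mul hBpos.le,
          show p / 2 * (2 / p) = 1 by field_simp, show (1 - p / 2) * (2 / p) = (2 - p) / p by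
            field_simp,
          Real.rpow_one, Real.mul_rpow hp0.le h1x.le, hPdef]
      ring
    have e2 : (p * (p - 1) * x) ^ (2 / p) = (p * (p - 1) ^ (2 / p) * x ^ (2 / p)) * P := by
      rw [Real.mul_rpow (by positivity) hx0.le, Real.mul_rpow hp0.le hp1'.le, ep]
      ring
    have hL2 : (A ^ (p / 2) * (p * (1 - x)) ^ (1 - p / 2)) ^ (2 / p)
        ≤ (p * (p - 1) * x) ^ (2 / p) :=
      Real.rpow_le_rpow (by positivity) (le_of_le_of_eq hle hsum) hc.le
    rw [e1, e2] at hL2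
    have hfirst : (1 - x) ^ ((2 - p) / p) * A ≤ p * (p - 1) ^ (2 / p) * x ^ (2 / p) :=
      le_of_mul_le_mul_right hL2 hPpos
    refine ⟨hfirst, ?_⟩
    rw [← hAB]
    constructor
    · intro h
      have h' : (A ^ (p / 2) * (p * (1 - x)) ^ (1 - p / 2)) ^ (2 / p)
          = (p * (p - 1) * x) ^ (2 / p) := by rw [e1, e2, h]
      have h'' := (rpow_left_inj' (by positivity) (by positivity) hc).1 h'
      exact hiff.1 (h''.trans hsum.symm)
    · intro h
      have h' : A ^ (p / 2) * (p * (1 - x)) ^ (1 - p / 2) = p * (p - 1) * x :=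
        (hiff.2 h).trans hsum
      have h'' : (A ^ (p / 2) * (p * (1 - x)) ^ (1 - p / 2)) ^ (2 / p)
          = (p * (p - 1) * x) ^ (2 / p) := by rw [h']
      rw [e1, e2] at h''
      exact mul_right_cancel₀ hPpos.ne' h''

theorem stmt_3 (N : ℕ) (hN : 5 ≤ N) (p : ℝ) (hp : p = (N : ℝ) / ((N : ℝ) - 2))
    (μ₁ β : ℝ) (hμ₁ : 0 < μ₁) (hβ : 0 < β)
    (h₁ : ℝ → ℝ)
    (hh₁ : ∀ k, h₁ k = β ^ (-(2 / p)) * (k ^ (1 - p / 2) - μ₁ * k ^ (p / 2)) ^ (2 / p)) :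
    h₁ 0 = 0 ∧ h₁ (μ₁ ^ (-(1 / (p - 1)))) = 0 ∧
    StrictMonoOn h₁ (Set.Icc 0 (((2 - p) / (p * μ₁)) ^ (1 / (p - 1)))) ∧
    StrictAntiOn h₁
      (Set.Icc (((2 - p) / (p * μ₁)) ^ (1 / (p - 1))) (μ₁ ^ (-(1 / (p - 1))))) ∧
    ∀ k ∈ Set.Ioo (0 : ℝ) (μ₁ ^ (-(1 / (p - 1)))),
      -(β ^ (-(2 / p)) * μ₁ ^ (2 / p) * (p - 1) ^ (2 / p)) ≤ deriv h₁ k ∧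
      (deriv h₁ k = -(β ^ (-(2 / p)) * μ₁ ^ (2 / p) * (p - 1) ^ (2 / p)) ↔
        k = (p * μ₁) ^ (-(1 / (p - 1)))) := by
  have hN' : (5:ℝ) ≤ (N:ℝ) := by exact_mod_cast hN
  have hN2 : (0:ℝ) < (N : ℝ) - 2 := by linarith
  have hp1 : 1 < p := by rw [hp, lt_div_iff₀ hN2]; linarith
  have hp2 : p < 2 := by rw [hp, div_lt_iff₀ hN2]; linarith
  have hp0 : 0 < p := by linarith
  have hp1' : 0 < p - 1 := by linarith
  have h2p : 0 < (2:ℝ) - p := by linarith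
  have hpa : 0 < 1 - p / 2 := by linarith
  have hpb : 0 < p / 2 := by linarith
  have hpc : 0 < 2 / p := by positivity
  set k₁ : ℝ := ((2 - p) / (p * μ₁)) ^ (1 / (p - 1)) with hk₁def
  set k₂ : ℝ := μ₁ ^ (-(1 / (p - 1))) with hk₂def
  have hc₁pos : 0 < (2 - p) / (p * μ₁) := by positivity
  have hk₁pos : 0 < k₁ := Real.rpow_pos_of_pos hc₁pos _
  have hk₂pos : 0 < k₂ := Real.rpow_pos_of_pos hμ₁ _
  have hk₁pow : k₁ ^ (p - 1) = (2 - p) / (p * μ₁) := by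
    rw [hk₁def, ← Real.rpow_mul hc₁pos.le,
      show 1 / (p - 1) * (p - 1) = 1 by field_simp, Real.rpow_one]
  have hk₂pow : k₂ ^ (p - 1) = μ₁⁻¹ := by
    rw [hk₂def, ← Real.rpow_mul hμ₁.le,
      show -(1 / (p - 1)) * (p - 1) = -1 by field_simp, Real.rpow_neg_one]
  have hk₁k₂ : k₁ < k₂ := by
    rw [← Real.rpow_lt_rpow_iff hk₁pos.le hk₂pos.le hp1', hk₁pow, hk₂pow,
      div_lt_iff₀ (by positivity : (0:ℝ) < p * μ₁)]
    have e : μ₁⁻¹ * (p * μ₁) = p := by field_simp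
    rw [e]; linarith
  -- comparison lemmas
  have hlt₂ : ∀ k : ℝ, 0 < k → (k < k₂ ↔ μ₁ * k ^ (p - 1) < 1) := by
    intro k hk
    rw [← Real.rpow_lt_rpow_iff hk.le hk₂pos.le hp1', hk₂pow, inv_eq_one_div,
      lt_div_iff₀ hμ₁]
    constructor <;> intro h <;> linarith
  have hlt₁ : ∀ k : ℝ, 0 < k → (k < k₁ ↔ μ₁ * k ^ (p - 1) < (2 - p) / p) := by
    intro k hk
    rw [← Real.rpow_lt_rpow_iff hk.le hk₁pos.le hp1', hk₁pow,
      show (2 - p) / (p * μ₁) = (2 - p) / p / μ₁ from (div_div _ _ _).symm,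
      lt_div_iff₀ hμ₁]
    constructor <;> intro h <;> linarith
  have hgt₁ : ∀ k : ℝ, 0 < k → (k₁ < k ↔ (2 - p) / p < μ₁ * k ^ (p - 1)) := by
    intro k hk
    rw [← Real.rpow_lt_rpow_iff hk₁pos.le hk.le hp1', hk₁pow,
      show (2 - p) / (p * μ₁) = (2 - p) / p / μ₁ from (div_div _ _ _).symm,
      div_lt_iff₀ hμ₁]
    constructor <;> intro h <;> linarith
  -- positivity of the inner expression
  have hgpos : ∀ k : ℝ, 0 < k → μ₁ * k ^ (p - 1) < 1 →
      0 < k ^ (1 - p / 2) - μ₁ * k ^ (p / 2) := by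
    intro k hk hx
    have e1p : k ^ (1 - p) = (k ^ (p - 1))⁻¹ := by
      rw [show (1:ℝ) - p = -(p - 1) by ring, Real.rpow_neg hk.le]
    have eG : k ^ (1 - p / 2) - μ₁ * k ^ (p / 2) = k ^ (p / 2) * (k ^ (1 - p) - μ₁) := by
      rw [show (1:ℝ) - p / 2 = p / 2 + (1 - p) by ring, Real.rpow_add hk]; ring
    rw [eG]
    apply mul_pos (Real.rpow_pos_of_pos hk _)
    rw [e1p, sub_pos, inv_eq_one_div,
      lt_div_iff₀ (by positivity : (0:ℝ) < k ^ (p - 1))]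
    linarith
  -- derivative
  have hderiv : ∀ k : ℝ, 0 < k → 0 < k ^ (1 - p / 2) - μ₁ * k ^ (p / 2) →
      HasDerivAt h₁ (β ^ (-(2 / p)) * ((2 / p) *
        (k ^ (1 - p / 2) - μ₁ * k ^ (p / 2)) ^ (2 / p - 1) *
        ((1 - p / 2) * k ^ (-(p / 2)) - μ₁ * ((p / 2) * k ^ (p / 2 - 1))))) k := by
    intro k hk hg
    have hfun : h₁ = fun k => β ^ (-(2 / p)) * (k ^ (1 - p / 2) - μ₁ * k ^ (p / 2)) ^ (2 / p) :=
      funext hh₁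
    rw [hfun]
    have h1 : HasDerivAt (fun k : ℝ => k ^ (1 - p / 2)) ((1 - p / 2) * k ^ (1 - p / 2 - 1)) k :=
      Real.hasDerivAt_rpow_const (Or.inl hk.ne')
    have h2 : HasDerivAt (fun k : ℝ => k ^ (p / 2)) ((p / 2) * k ^ (p / 2 - 1)) k :=
      Real.hasDerivAt_rpow_const (Or.inl hk.ne')
    have hinner : HasDerivAt (fun k : ℝ => k ^ (1 - p / 2) - μ₁ * k ^ (p / 2))
        ((1 - p / 2) * k ^ (-(p / 2)) - μ₁ * ((p / 2) * k ^ (p / 2 - 1))) k := by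
      have := h1.sub ((h2).const_mul μ₁)
      rwa [show (1:ℝ) - p / 2 - 1 = -(p / 2) by ring] at this
    have houter : HasDerivAt (fun y : ℝ => y ^ (2 / p))
        ((2 / p) * (k ^ (1 - p / 2) - μ₁ * k ^ (p / 2)) ^ (2 / p - 1))
        (k ^ (1 - p / 2) - μ₁ * k ^ (p / 2)) :=
      Real.hasDerivAt_rpow_const (Or.inl hg.ne')
    exact (houter.comp k hinner).const_mul _
  -- the factored form of the sign-determining factor
  have hSfact : ∀ k : ℝ, 0 < k →
      (1 - p / 2) * k ^ (-(p / 2)) - μ₁ * ((p / 2) * k ^ (p / 2 - 1))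
        = k ^ (-(p / 2)) * ((1 - p / 2) - (p / 2) * (μ₁ * k ^ (p - 1))) := by
    intro k hk
    rw [show p / 2 - 1 = -(p / 2) + (p - 1) by ring, Real.rpow_add hk]
    ring
  -- continuity of h₁
  have hcont : Continuous h₁ := by
    have hfun : h₁ = fun k => β ^ (-(2 / p)) * (k ^ (1 - p / 2) - μ₁ * k ^ (p / 2)) ^ (2 / p) :=
      funext hh₁
    rw [hfun]
    exact continuous_const.mul ((Real.continuous_rpow_const hpc.le).comp
      ((Real.continuous_rpow_const hpa.le).sub
        (continuous_const.mul (Real.continuous_rpow_const hpb.le))))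
  refine ⟨?_, ?_, ?_, ?_, ?_⟩
  · -- h₁ 0 = 0
    rw [hh₁ 0, Real.zero_rpow hpa.ne', Real.zero_rpow hpb.ne', mul_zero, sub_zero,
      Real.zero_rpow hpc.ne', mul_zero]
  · -- h₁ k₂ = 0
    have e1 : k₂ ^ (1 - p) = μ₁ := by
      rw [hk₂def, ← Real.rpow_mul hμ₁.le,
        show -(1 / (p - 1)) * (1 - p) = 1 by field_simp; ring, Real.rpow_one]
    have e2 : k₂ ^ (1 - p / 2) = μ₁ * k₂ ^ (p / 2) := by
      rw [show (1:ℝ) - p / 2 = (1 - p) + p / 2 by ring, Real.rpow_add hk₂pos, e1]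
    rw [hh₁ k₂, e2, sub_self, Real.zero_rpow hpc.ne', mul_zero]
  · -- strict mono on [0, k₁]
    apply strictMonoOn_of_deriv_pos (convex_Icc _ _) hcont.continuousOn
    intro k hk
    rw [interior_Icc] at hk
    obtain ⟨hk0, hkk₁⟩ := hk
    have hx1 : μ₁ * k ^ (p - 1) < (2 - p) / p := (hlt₁ k hk0).1 hkk₁
    have hxlt1 : μ₁ * k ^ (p - 1) < 1 := by
      have : (2 - p) / p < 1 := by rw [div_lt_one hp0]; linarith
      linarith
    have hg := hgpos k hk0 hxlt1
    rw [(hderiv k hk0 hg).deriv, hSfact k hk0]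
    have hfac : 0 < (1 - p / 2) - (p / 2) * (μ₁ * k ^ (p - 1)) := by
      have h := mul_lt_mul_of_pos_left hx1 hpb
      have e : p / 2 * ((2 - p) / p) = (2 - p) / 2 := by field_simp
      rw [e] at h
      linarith
    have := Real.rpow_pos_of_pos hg (2 / p - 1)
    have := Real.rpow_pos_of_pos hk0 (-(p / 2))
    positivity
  · -- strict anti on [k₁, k₂]
    apply strictAntiOn_of_deriv_neg (convex_Icc _ _) hcont.continuousOn
    intro k hk
    rw [interior_Icc] at hk
    obtain ⟨hkk₁, hkk₂⟩ := hk
    have hk0 : 0 < k := hk₁pos.trans hkk₁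
    have hx1 : (2 - p) / p < μ₁ * k ^ (p - 1) := (hgt₁ k hk0).1 hkk₁
    have hxlt1 : μ₁ * k ^ (p - 1) < 1 := (hlt₂ k hk0).1 hkk₂
    have hg := hgpos k hk0 hxlt1
    rw [(hderiv k hk0 hg).deriv, hSfact k hk0]
    have hfac : (1 - p / 2) - (p / 2) * (μ₁ * k ^ (p - 1)) < 0 := by
      have h := mul_lt_mul_of_pos_left hx1 hpb
      have e : p / 2 * ((2 - p) / p) = (2 - p) / 2 := by field_simp
      rw [e] at h
      linarith
    have hg' := Real.rpow_pos_of_pos hg (2 / p - 1)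
    have hk' := Real.rpow_pos_of_pos hk0 (-(p / 2))
    have hβ' := Real.rpow_pos_of_pos hβ (-(2 / p))
    apply mul_neg_of_pos_of_neg hβ'
    apply mul_neg_of_pos_of_neg (by positivity)
    exact mul_neg_of_pos_of_neg hk' hfac
  · -- the derivative bound
    rintro k ⟨hk0, hkk₂⟩
    set c : ℝ := β ^ (-(2 / p)) * μ₁ ^ (2 / p) with hcdef
    have hcpos : 0 < c := by
      rw [hcdef]; positivity
    set x : ℝ := μ₁ * k ^ (p - 1) with hxdef
    have hx0 : 0 < x := by rw [hxdef]; positivity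
    have hx1 : x < 1 := (hlt₂ k hk0).1 hkk₂
    have h1x : 0 < 1 - x := by linarith
    have hg := hgpos k hk0 hx1
    obtain ⟨hkey_le, hkey_iff⟩ := key hp1 hp2 hx0 hx1
    -- auxiliary rpow computations
    have e1p : k ^ (1 - p) = μ₁ / x := by
      rw [show (1:ℝ) - p = -(p - 1) by ring, Real.rpow_neg hk0.le, hxdef,
        eq_div_iff (by positivity : μ₁ * k ^ (p - 1) ≠ 0)]
      field_simp
    have hxpow : x ^ (2 / p) = x * x ^ ((2 - p) / p) := by
      nth_rewrite 2 [← Real.rpow_one x]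
      rw [← Real.rpow_add hx0]
      congr 1
      field_simp
      ring
    have hμpow : μ₁ ^ (2 / p) = μ₁ * μ₁ ^ ((2 - p) / p) := by
      nth_rewrite 2 [← Real.rpow_one μ₁]
      rw [← Real.rpow_add hμ₁]
      congr 1
      field_simp
      ring
    have eG2 : k ^ (1 - p / 2) - μ₁ * k ^ (p / 2) = k ^ (p / 2) * (μ₁ * (1 - x) / x) := by
      rw [show (1:ℝ) - p / 2 = p / 2 + (1 - p) by ring, Real.rpow_add hk0, e1p]
      field_simp
    have hCpos : 0 < μ₁ * (1 - x) / x := by positivity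
    have eGp : (k ^ (1 - p / 2) - μ₁ * k ^ (p / 2)) ^ (2 / p - 1)
        = k ^ ((2 - p) / 2) * (μ₁ * (1 - x) / x) ^ ((2 - p) / p) := by
      rw [eG2, Real.mul_rpow (Real.rpow_nonneg hk0.le _) hCpos.le,
        ← Real.rpow_mul hk0.le, show p / 2 * (2 / p - 1) = (2 - p) / 2 by field_simp,
        show (2:ℝ) / p - 1 = (2 - p) / p by field_simp]
    have eC : (μ₁ * (1 - x) / x) ^ ((2 - p) / p)
        = μ₁ ^ ((2 - p) / p) * (1 - x) ^ ((2 - p) / p) / x ^ ((2 - p) / p) := by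
      rw [Real.div_rpow (by positivity) hx0.le, Real.mul_rpow hμ₁.le h1x.le]
    have eA : k ^ ((2 - p) / 2) = μ₁ / x * k ^ (p / 2) := by
      rw [show (2 - p) / 2 = (1 - p) + p / 2 by ring, Real.rpow_add hk0, e1p]
    have eB : k ^ (-(p / 2)) = (k ^ (p / 2))⁻¹ := Real.rpow_neg hk0.le _
    have hkp2 : (0:ℝ) < k ^ (p / 2) := Real.rpow_pos_of_pos hk0 _
    have hxep : (0:ℝ) < x ^ ((2 - p) / p) := Real.rpow_pos_of_pos hx0 _
    -- the main derivative identity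
    have hDer : deriv h₁ k * (p * x ^ (2 / p))
        = c * ((1 - x) ^ ((2 - p) / p) * ((2 - p) - p * x)) := by
      rw [(hderiv k hk0 hg).deriv, hSfact k hk0, eGp, eC, eA, eB, hxpow, hcdef, hμpow,
        ← hxdef]
      set t := k ^ (p / 2) with htdef
      set z := x ^ ((2 - p) / p) with hzdef
      have htne : t ≠ 0 := hkp2.ne'
      have hzne : z ≠ 0 := hxep.ne'
      clear_value t z x c
      field_simp
    have hP2pos : 0 < p * x ^ (2 / p) := by positivity
    constructor
    · apply le_of_mul_le_mul_right _ hP2pos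
      rw [hDer]
      have h := mul_le_mul_of_nonneg_left hkey_le hcpos.le
      linarith [h]
    · have hxk : x = 1 / p ↔ k = (p * μ₁) ^ (-(1 / (p - 1))) := by
        have hpm : (0:ℝ) < p * μ₁ := by positivity
        have hkkpow : ((p * μ₁) ^ (-(1 / (p - 1)))) ^ (p - 1) = (p * μ₁)⁻¹ := by
          rw [← Real.rpow_mul hpm.le, show -(1 / (p - 1)) * (p - 1) = -1 by field_simp,
            Real.rpow_neg_one]
        constructor
        · intro h
          have h1 : k ^ (p - 1) = (p * μ₁)⁻¹ := by
            rw [hxdef] at h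
            field_simp at h ⊢
            linarith
          exact (rpow_left_inj' hk0.le (Real.rpow_pos_of_pos hpm _).le hp1').1
            (h1.trans hkkpow.symm)
        · intro h
          rw [hxdef, h, hkkpow]
          field_simp
      rw [← hxk, ← hkey_iff]
      constructor
      · intro h
        have h2 : c * ((1 - x) ^ ((2 - p) / p) * ((2 - p) - p * x))
            = -(c * (p - 1) ^ (2 / p)) * (p * x ^ (2 / p)) := by rw [← hDer, h]
        have h3 : (1 - x) ^ ((2 - p) / p) * ((2 - p) - p * x)
            = -((p - 1) ^ (2 / p) * (p * x ^ (2 / p))) :=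
          mul_left_cancel₀ hcpos.ne' (by linear_combination h2)
        linear_combination -h3
      · intro h
        apply mul_right_cancel₀ hP2pos.ne'
        rw [hDer]
        linear_combination (-c) * h
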